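/- Let δ be a positive integer divisible by 6 and let Q ∈ ℤ[T]. For an integer t with Q(t) ≠ 0, define h(t) = ∏ (−1/p), the product running over all primes p not dividing δ such that ν_p(Q(t)) ≡ 2 (mod 4). Let t₁, t₂ be integers, c a nonzero integer, l and η squarefree integers, and q₀ a prime with q₀ ∤ δ and gcd(q₀, cη) = 1, such that Q(t₁) = c²·l with gcd(c,l) = 1, and Q(t₂) = (c·q₀)²·η with gcd(c,η) = 1. If the Legendre symbol (−1/q₀) equals −1, then h(t₁) = −h(t₂). -/

import Mathlib

lemma not_dvd_of_gcd (p : ℕ) (hp : p.Prime) (x y : ℤ) (hxy : Int.gcd x y = 1)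
    (hx : (p : ℤ) ∣ x) : ¬ (p : ℤ) ∣ y := by
  intro hy
  have h : (p : ℤ) ∣ (Int.gcd x y : ℤ) := Int.dvd_coe_gcd hx hy
  rw [hxy] at h
  have h1 : p ∣ 1 := by exact_mod_cast h
  have := Nat.dvd_one.mp h1
  have := hp.one_lt
  omega

lemma key (p : ℕ) (hp : p.Prime) (c l : ℤ) (hc : c ≠ 0) (hl : Squarefree l)
    (hcl : Int.gcd c l = 1) :
    padicValInt p (c ^ 2 * l) % 4 = 2 ↔ padicValInt p c % 2 = 1 := by
  haveI : Fact p.Prime := ⟨hp⟩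
  have hl0 : l ≠ 0 := hl.ne_zero
  have hsq : c ^ 2 ≠ 0 := pow_ne_zero _ hc
  have hmul : padicValInt p (c ^ 2 * l) = 2 * padicValInt p c + padicValInt p l := by
    rw [padicValInt.mul hsq hl0, sq, padicValInt.mul hc hc]; ring
  have hple := hp.one_lt
  have hle : padicValInt p l ≤ 1 := by
    by_contra h
    push_neg at h
    have h2 : (p : ℤ) ^ 2 ∣ l := (padicValInt_dvd_iff 2 l).2 (Or.inr h)
    rw [sq] at h2
    have := hl _ h2
    rw [Int.isUnit_iff] at this
    rcases this with h' | h' <;> omega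
  constructor
  · intro h
    rcases Nat.lt_or_ge (padicValInt p l) 1 with hE | hE
    · omega
    · exfalso
      have hpl : (p : ℤ) ∣ l := by
        have := (padicValInt_dvd_iff 1 l).2 (Or.inr hE)
        simpa using this
      have : padicValInt p c = 0 := padicValInt.eq_zero_of_not_dvd
        (not_dvd_of_gcd p hp l c (by rwa [Int.gcd_comm]) hpl)
      omega
  · intro h
    have h1 : 1 ≤ padicValInt p c := by omega
    have hpc : (p : ℤ) ∣ c := by
      have := (padicValInt_dvd_iff 1 c).2 (Or.inr h1)
      simpa using this
    have : padicValInt p l = 0 := padicValInt.eq_zero_of_not_dvd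
      (not_dvd_of_gcd p hp c l hcl hpc)
    omega

lemma mem_iff (δ : ℕ) (m : ℤ) (hm : m ≠ 0) (p : ℕ) :
    (p ∈ m.natAbs.primeFactors.filter
      (fun p => ¬ p ∣ δ ∧ padicValInt p m % 4 = 2)) ↔
      p.Prime ∧ ¬ p ∣ δ ∧ padicValInt p m % 4 = 2 := by
  rw [Finset.mem_filter, Nat.mem_primeFactors]
  constructor
  · rintro ⟨⟨h1, h2, h3⟩, h4, h5⟩; exact ⟨h1, h4, h5⟩
  · rintro ⟨h1, h4, h5⟩
    refine ⟨⟨h1, ?_, Int.natAbs_ne_zero.mpr hm⟩, h4, h5⟩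
    by_contra hd
    have : padicValInt p m = 0 := padicValInt.eq_zero_of_not_dvd (by rwa [Int.natCast_dvd])
    omega

/-- The corrective term `h(t) = ∏ (-1/p)`, the product running over the primes `p ∤ δ`
with `ν_p(Q(t)) ≡ 2 (mod 4)` (types `III`, `III*`). -/
def corrTerm (δ : ℕ) (Q : Polynomial ℤ) (t : ℤ) : ℤ :=
  ∏ p ∈ ((Q.eval t).natAbs.primeFactors.filter
    (fun p => ¬ p ∣ δ ∧ padicValInt p (Q.eval t) % 4 = 2)),
    if hp : p.Prime then @legendreSym p ⟨hp⟩ (-1) else 1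

/-- Sign change of the corrective term at a prime `q₀` with `(-1/q₀) = -1`. -/
theorem stmt_15 (δ : ℕ) (hδ : 0 < δ) (h6 : 6 ∣ δ) (Q : Polynomial ℤ)
    (t₁ t₂ c l η : ℤ) (hc : c ≠ 0) (hl : Squarefree l) (hη : Squarefree η)
    (q₀ : ℕ) (hq : q₀.Prime) (hqδ : ¬ q₀ ∣ δ)
    (hqcη : Int.gcd (q₀ : ℤ) (c * η) = 1)
    (h1 : Q.eval t₁ = c ^ 2 * l) (hcl : Int.gcd c l = 1)
    (h2 : Q.eval t₂ = (c * (q₀ : ℤ)) ^ 2 * η) (hcη : Int.gcd c η = 1)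
    (hleg : @legendreSym q₀ ⟨hq⟩ (-1) = -1) :
    corrTerm δ Q t₁ = - corrTerm δ Q t₂ := by
  have hq0ne : (q₀ : ℤ) ≠ 0 := Int.natCast_ne_zero.mpr hq.ne_zero
  have hcq : c * (q₀ : ℤ) ≠ 0 := mul_ne_zero hc hq0ne
  have hl0 : l ≠ 0 := hl.ne_zero
  have hη0 : η ≠ 0 := hη.ne_zero
  have hm1 : c ^ 2 * l ≠ 0 := mul_ne_zero (pow_ne_zero _ hc) hl0
  have hm2 : (c * (q₀ : ℤ)) ^ 2 * η ≠ 0 := mul_ne_zero (pow_ne_zero _ hcq) hη0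
  -- q₀ does not divide c
  have hq0c : ¬ (q₀ : ℤ) ∣ c := by
    intro hd
    have := not_dvd_of_gcd q₀ hq (q₀ : ℤ) (c * η) hqcη dvd_rfl
    exact this (hd.mul_right η)
  have hq0η : ¬ (q₀ : ℤ) ∣ η := by
    intro hd
    have := not_dvd_of_gcd q₀ hq (q₀ : ℤ) (c * η) hqcη dvd_rfl
    exact this (hd.mul_left c)
  -- gcd (c * q₀) η = 1
  have hcqη : Int.gcd (c * (q₀ : ℤ)) η = 1 := by
    have ha := (Int.isCoprime_iff_gcd_eq_one.2 hqcη).of_mul_right_right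
    have hb := Int.isCoprime_iff_gcd_eq_one.2 hcη
    exact Int.isCoprime_iff_gcd_eq_one.1 (IsCoprime.mul_left hb ha)
  set A := (c ^ 2 * l).natAbs.primeFactors.filter
    (fun p => ¬ p ∣ δ ∧ padicValInt p (c ^ 2 * l) % 4 = 2) with hA
  set B := ((c * (q₀ : ℤ)) ^ 2 * η).natAbs.primeFactors.filter
    (fun p => ¬ p ∣ δ ∧ padicValInt p ((c * (q₀ : ℤ)) ^ 2 * η) % 4 = 2) with hB
  have hAmem : ∀ p, p ∈ A ↔ p.Prime ∧ ¬ p ∣ δ ∧ padicValInt p c % 2 = 1 := by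
    intro p
    rw [hA, mem_iff δ _ hm1]
    constructor
    · rintro ⟨hp, h4, h5⟩; exact ⟨hp, h4, (key p hp c l hc hl hcl).1 h5⟩
    · rintro ⟨hp, h4, h5⟩; exact ⟨hp, h4, (key p hp c l hc hl hcl).2 h5⟩
  have hBmem : ∀ p, p ∈ B ↔ p.Prime ∧ ¬ p ∣ δ ∧ padicValInt p (c * (q₀ : ℤ)) % 2 = 1 := by
    intro p
    rw [hB, mem_iff δ _ hm2]
    constructor
    · rintro ⟨hp, h4, h5⟩; exact ⟨hp, h4, (key p hp _ η hcq hη hcqη).1 h5⟩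
    · rintro ⟨hp, h4, h5⟩; exact ⟨hp, h4, (key p hp _ η hcq hη hcqη).2 h5⟩
  have hq0val : padicValInt q₀ c = 0 :=
    @padicValInt.eq_zero_of_not_dvd q₀ c hq0c
  have hBinsert : B = insert q₀ A := by
    ext p
    rw [Finset.mem_insert, hAmem, hBmem]
    constructor
    · rintro ⟨hp, hpδ, hval⟩
      haveI : Fact p.Prime := ⟨hp⟩
      by_cases hpq : p = q₀
      · exact Or.inl hpq
      · right
        refine ⟨hp, hpδ, ?_⟩
        have h0 : padicValInt p (q₀ : ℤ) = 0 := padicValInt.eq_zero_of_not_dvd (by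
          rw [Int.natCast_dvd_natCast]
          exact fun hd => hpq ((Nat.prime_dvd_prime_iff_eq hp hq).1 hd))
        rw [padicValInt.mul hc hq0ne, h0] at hval
        omega
    · rintro (rfl | ⟨hp, hpδ, hval⟩)
      · refine ⟨hq, hqδ, ?_⟩
        haveI : Fact p.Prime := ⟨hq⟩
        rw [padicValInt.mul hc hq0ne, hq0val, padicValInt_self]
      · refine ⟨hp, hpδ, ?_⟩
        haveI : Fact p.Prime := ⟨hp⟩
        by_cases hpq : p = q₀
        · subst hpq; omega
        · have h0 : padicValInt p (q₀ : ℤ) = 0 := padicValInt.eq_zero_of_not_dvd (by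
            rw [Int.natCast_dvd_natCast]
            exact fun hd => hpq ((Nat.prime_dvd_prime_iff_eq hp hq).1 hd))
          rw [padicValInt.mul hc hq0ne, h0]
          omega
  have hq0A : q₀ ∉ A := by
    rw [hAmem]
    rintro ⟨_, _, hval⟩
    omega
  have e1 : corrTerm δ Q t₁ =
      ∏ p ∈ A, if hp : p.Prime then @legendreSym p ⟨hp⟩ (-1) else 1 := by
    simp only [corrTerm, h1, hA]
  have e2 : corrTerm δ Q t₂ =
      ∏ p ∈ B, if hp : p.Prime then @legendreSym p ⟨hp⟩ (-1) else 1 := by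
    simp only [corrTerm, h2, hB]
  rw [e1, e2, hBinsert, Finset.prod_insert hq0A, dif_pos hq, hleg]
  ring
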